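/- arXiv:1708.00883 — 2 statements merged into one kernel-verified Lean document; each statement's English description precedes it below -/
import Mathlib

section
/- Let G be a tripartite graph on mnq vertices that is degree symmetric under a GTPT, and let G' be the graph obtained from G by the GTPT. If the Laplacian density matrix ρ_l(G) is fully separable on H_A ⊗ H_B ⊗ H_C, then ρ_l(G') is fully separable. -/
open Matrix Kronecker
open scoped ComplexOrder

/-- The graph theoretical partial transpose (GTPT) of a tripartite graph on
`Fin m × Fin n × Fin q`: each edge `(v_{i,j,k}, v_{s,u,v})` with `i ≠ s` is replaced by
`(v_{s,j,k}, v_{i,u,v})`, and all other edges are kept. Its adjacency matrix is the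
partial transpose (in the first factor) of that of `G`. -/
def gtpt {m n q : ℕ} (G : SimpleGraph (Fin m × Fin n × Fin q)) :
    SimpleGraph (Fin m × Fin n × Fin q) where
  Adj x y := G.Adj (y.1, x.2) (x.1, y.2)
  symm := ⟨fun x y h => G.adj_symm h⟩
  loopless := ⟨fun x h => G.irrefl h⟩

instance {m n q : ℕ} (G : SimpleGraph (Fin m × Fin n × Fin q)) [DecidableRel G.Adj] :
    DecidableRel (gtpt G).Adj :=
  fun x y => inferInstanceAs (Decidable (G.Adj _ _))

/-- A density matrix: positive semidefinite with unit trace. -/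
def IsDensity {d : Type*} [Fintype d] [DecidableEq d] (ρ : Matrix d d ℂ) : Prop :=
  ρ.PosSemidef ∧ ρ.trace = 1

/-- Full separability of a tripartite matrix on `ℂ^m ⊗ ℂ^n ⊗ ℂ^q`. -/
def FullySep3 {m n q : ℕ} (ρ : Matrix (Fin m × Fin n × Fin q) (Fin m × Fin n × Fin q) ℂ) :
    Prop :=
  ∃ (t : ℕ) (p : Fin t → ℝ)
    (A : Fin t → Matrix (Fin m) (Fin m) ℂ)
    (B : Fin t → Matrix (Fin n) (Fin n) ℂ)
    (C : Fin t → Matrix (Fin q) (Fin q) ℂ),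
    (∀ i, 0 ≤ p i) ∧ (∑ i, p i = 1) ∧
    (∀ i, IsDensity (A i)) ∧ (∀ i, IsDensity (B i)) ∧ (∀ i, IsDensity (C i)) ∧
    ρ = ∑ i, (p i : ℂ) • (A i ⊗ₖ (B i ⊗ₖ C i))

/-- The Laplacian density matrix `ρ_l(G) = L(G) / tr(L(G))` (over `ℂ`). -/
noncomputable def rhoLap {m n q : ℕ} (G : SimpleGraph (Fin m × Fin n × Fin q))
    [DecidableRel G.Adj] : Matrix (Fin m × Fin n × Fin q) (Fin m × Fin n × Fin q) ℂ :=
  ((G.lapMatrix ℂ).trace)⁻¹ • G.lapMatrix ℂ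

/-- Partial transpose in the first factor. -/
def ptA {m n q : ℕ} (M : Matrix (Fin m × Fin n × Fin q) (Fin m × Fin n × Fin q) ℂ) :
    Matrix (Fin m × Fin n × Fin q) (Fin m × Fin n × Fin q) ℂ :=
  Matrix.of fun x y => M (y.1, x.2) (x.1, y.2)

lemma ptA_trace {m n q : ℕ} (M : Matrix (Fin m × Fin n × Fin q) (Fin m × Fin n × Fin q) ℂ) :
    (ptA M).trace = M.trace := by
  simp [ptA, Matrix.trace, Matrix.diag]

lemma lap_gtpt {m n q : ℕ} (G : SimpleGraph (Fin m × Fin n × Fin q)) [DecidableRel G.Adj]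
    (hdeg : ∀ v, G.degree v = (gtpt G).degree v) :
    (gtpt G).lapMatrix ℂ = ptA (G.lapMatrix ℂ) := by
  ext x y
  simp only [SimpleGraph.lapMatrix, SimpleGraph.degMatrix, Matrix.sub_apply, ptA,
    Matrix.of_apply, SimpleGraph.adjMatrix_apply]
  by_cases h : x = y
  · subst h
    simp only [Matrix.of_apply, Prod.mk.eta, if_pos rfl]
    rw [if_neg ((gtpt G).loopless.irrefl x), if_neg (G.loopless.irrefl x)]
    simp [hdeg x]
  · have hxy : ¬ ((y.1, x.2) : Fin m × Fin n × Fin q) = (x.1, y.2) := by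
      rintro he
      apply h
      obtain ⟨x1, x2⟩ := x; obtain ⟨y1, y2⟩ := y
      simp_all [Prod.ext_iff]
    rw [Matrix.diagonal_apply_ne _ h, Matrix.diagonal_apply_ne _ hxy]
    rfl

lemma ptA_kron {m n q : ℕ} (A : Matrix (Fin m) (Fin m) ℂ)
    (M : Matrix (Fin n × Fin q) (Fin n × Fin q) ℂ) :
    ptA (A ⊗ₖ M) = Aᵀ ⊗ₖ M := by
  ext x y
  simp [ptA, Matrix.kroneckerMap_apply, Matrix.transpose_apply]

/-- If a tripartite graph `G` is degree symmetric under GTPT, then full separability of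
`ρ_l(G)` implies full separability of `ρ_l(G')`, where `G'` is the GTPT of `G`. -/
theorem fullySep_of_degreeSymmetric {m n q : ℕ}
    (G : SimpleGraph (Fin m × Fin n × Fin q)) [DecidableRel G.Adj]
    (hdeg : ∀ v, G.degree v = (gtpt G).degree v)
    (hsep : FullySep3 (rhoLap G)) :
    FullySep3 (rhoLap (gtpt G)) := by
  obtain ⟨t, p, A, B, C, hp, hps, hA, hB, hC, heq⟩ := hsep
  refine ⟨t, p, fun i => (A i)ᵀ, B, C, hp, hps, ?_, hB, hC, ?_⟩
  · intro i
    exact ⟨(hA i).1.transpose, by rw [Matrix.trace_transpose]; exact (hA i).2⟩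
  · have hlap := lap_gtpt G hdeg
    have hpt : rhoLap (gtpt G) = ptA (rhoLap G) := by
      unfold rhoLap
      rw [hlap, ptA_trace]
      ext x y
      simp [ptA]
    rw [hpt, heq]
    ext x y
    simp [ptA, Matrix.sum_apply, Matrix.kroneckerMap_apply, Matrix.transpose_apply]
end

section
/- Every partially symmetric multipartite graph G (on N_1⋯N_n vertices) is degree symmetric under GTPT: each vertex has equal degree in G and in the GTPT graph G'. -/
/-- The graph theoretical partial transpose (GTPT) of a multipartite graph whose
vertices `v_{i_1,…,i_n}` are functions `x` with `x j : Fin (N j)`: each edge `(x, y)` with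
`x 0 ≠ y 0` is replaced by the edge obtained from exchanging the first coordinates of the
endpoints, and all other edges are kept. -/
def gtptN {k : ℕ} {N : Fin (k + 1) → ℕ}
    (G : SimpleGraph (∀ j : Fin (k + 1), Fin (N j))) :
    SimpleGraph (∀ j : Fin (k + 1), Fin (N j)) where
  Adj x y := G.Adj (Function.update x 0 (y 0)) (Function.update y 0 (x 0))
  symm := ⟨fun _ _ h => G.adj_symm h⟩
  loopless := ⟨fun x h => G.irrefl (v := x) (by simpa [Function.update_eq_self] using h)⟩

instance {k : ℕ} {N : Fin (k + 1) → ℕ} (G : SimpleGraph (∀ j : Fin (k + 1), Fin (N j)))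
    [DecidableRel G.Adj] : DecidableRel (gtptN G).Adj :=
  fun x y => inferInstanceAs (Decidable (G.Adj (Function.update x 0 (y 0)) (Function.update y 0 (x 0))))

/-- Every partially symmetric multipartite graph is degree symmetric under GTPT:
if for every edge `(x, y)` with `x 0 ≠ y 0` the pair obtained by exchanging the first
coordinates is also an edge, then every vertex has the same degree in `G` and in the
GTPT graph `G'`. -/
theorem degree_symmetric_of_partially_symmetric_multipartite {k : ℕ}
    {N : Fin (k + 1) → ℕ}
    (G : SimpleGraph (∀ j : Fin (k + 1), Fin (N j))) [DecidableRel G.Adj]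
    (hps : ∀ x y : ∀ j : Fin (k + 1), Fin (N j), x 0 ≠ y 0 → G.Adj x y →
      G.Adj (Function.update x 0 (y 0)) (Function.update y 0 (x 0))) :
    ∀ v, G.degree v = (gtptN G).degree v := by
  have key : ∀ v y, (gtptN G).Adj v y ↔ G.Adj v y := by
    intro v y
    by_cases h0 : v 0 = y 0
    · show G.Adj (Function.update v 0 (y 0)) (Function.update y 0 (v 0)) ↔ _
      rw [← h0, Function.update_eq_self, h0, Function.update_eq_self]
    · constructor
      · intro h
        have h' := hps _ _ (by simp [Ne.symm h0]) h
        simpa [Function.update_idem, Function.update_eq_self] using h'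
      · intro h
        exact hps v y h0 h
  intro v
  unfold SimpleGraph.degree
  congr 1
  ext y
  simp [SimpleGraph.mem_neighborFinset, key]
end
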